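/- Let Y be a complex Banach space, let Z be a bounded operator on Y, let K ⊆ iℝ be compact with σ(Z) ⊆ K, and let Ψ : C(K) → L(Y) be a continuous unital algebra homomorphism with Ψ(ι) = Z, where ι(z) = z. If g ∈ C(K) and g(w) = 0 for every w ∈ σ(Z), then Ψ(g) = 0. -/

import Mathlib

open Complex MeasureTheory Filter Topology
open scoped ENNReal NNReal Classical

noncomputable section

variable {X : Type*} [NormedAddCommGroup X] [NormedSpace ℂ X]

/-- `Ψ` is a bounded `C(K)`-calculus for the bounded operator `Z` : a continuous unital
algebra homomorphism `C(K) → L(X)` mapping the identity function `ι(z) = z` to `Z`. -/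
def IsCKCalculus (K : Set ℂ) (Z : X →L[ℂ] X) (Ψ : C(↥K, ℂ) → X →L[ℂ] X) : Prop :=
  (∀ g h : C(↥K, ℂ), Ψ (g + h) = Ψ g + Ψ h) ∧
  (∀ (c : ℂ) (g : C(↥K, ℂ)), Ψ (c • g) = c • Ψ g) ∧
  (∀ g h : C(↥K, ℂ), Ψ (g * h) = Ψ g * Ψ h) ∧
  Ψ 1 = 1 ∧
  (∃ C : ℝ, ∀ g : C(↥K, ℂ), ‖Ψ g‖ ≤ C * ⨆ z : K, ‖g z‖) ∧
  Ψ ⟨fun z => (z : ℂ), continuous_subtype_val⟩ = Z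

section Aux

variable [CompleteSpace X]

/-- If `f` is supported in a small ball around a resolvent point `l`, with
`r * ‖(l - Z)⁻¹‖ < 1`, then `Ψ f = 0`. -/
lemma ck_ball_lemma (Z : X →L[ℂ] X) (K : Set ℂ) [CompactSpace K]
    (Ψ : C(↥K, ℂ) → X →L[ℂ] X)
    (hadd : ∀ g h : C(↥K, ℂ), Ψ (g + h) = Ψ g + Ψ h)
    (hsmul : ∀ (c : ℂ) (g : C(↥K, ℂ)), Ψ (c • g) = c • Ψ g)
    (hmul : ∀ g h : C(↥K, ℂ), Ψ (g * h) = Ψ g * Ψ h)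
    (hone : Ψ 1 = 1)
    (hiota : Ψ ⟨fun z => (z : ℂ), continuous_subtype_val⟩ = Z)
    (C : ℝ) (hC0 : 0 ≤ C) (hC : ∀ f : C(↥K, ℂ), ‖Ψ f‖ ≤ C * ‖f‖)
    (l : ℂ) (hl : l ∉ spectrum ℂ Z)
    (r : ℝ) (hr : 0 ≤ r)
    (hrM : r * ‖Ring.inverse (algebraMap ℂ (X →L[ℂ] X) l - Z)‖ < 1)
    (f : C(↥K, ℂ)) (hf : ∀ z : ↥K, f z ≠ 0 → ‖(z : ℂ) - l‖ ≤ r) :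
    Ψ f = 0 := by
  set a : X →L[ℂ] X := algebraMap ℂ (X →L[ℂ] X) l - Z with ha
  have hu : IsUnit a := spectrum.notMem_iff.mp hl
  set R : X →L[ℂ] X := Ring.inverse a with hR
  set m : C(↥K, ℂ) := ⟨fun z => l - (z : ℂ),
    continuous_const.sub continuous_subtype_val⟩ with hm
  have hΨm : Ψ m = a := by
    have hme : m = (l : ℂ) • (1 : C(↥K, ℂ)) + (-1 : ℂ) • ⟨fun z => (z : ℂ),
        continuous_subtype_val⟩ := by
      ext z
      simp [hm, sub_eq_add_neg]
    rw [hme, hadd, hsmul, hsmul, hone, hiota, ha, Algebra.algebraMap_eq_smul_one]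
    simp [sub_eq_add_neg]
  have key : ∀ n : ℕ, ‖Ψ f‖ ≤ (C * ‖f‖) * (r * ‖R‖) ^ n := by
    intro n
    have hRn : ‖R ^ n‖ ≤ ‖R‖ ^ n := by
      induction n with
      | zero =>
        simp only [pow_zero]; exact ContinuousLinearMap.norm_id_le
      | succ k ihk =>
        calc ‖R ^ (k + 1)‖ = ‖R ^ k * R‖ := by rw [pow_succ]
          _ ≤ ‖R ^ k‖ * ‖R‖ := norm_mul_le _ _
          _ ≤ ‖R‖ ^ k * ‖R‖ := mul_le_mul_of_nonneg_right ihk (norm_nonneg _)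
          _ = ‖R‖ ^ (k + 1) := by rw [pow_succ]
    have hpow : Ψ (f * m ^ n) = Ψ f * a ^ n := by
      clear hRn
      induction n with
      | zero => simp
      | succ k ih =>
        rw [pow_succ, ← mul_assoc, hmul, ih, hΨm, pow_succ, mul_assoc]
    have hfm : Ψ f = Ψ (f * m ^ n) * R ^ n := by
      rw [hpow, mul_assoc, hR, Ring.inverse_pow, Ring.mul_inverse_cancel _ (hu.pow n), mul_one]
    have hnorm : ‖f * m ^ n‖ ≤ ‖f‖ * r ^ n := by
      rw [ContinuousMap.norm_le _ (by positivity)]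
      intro z
      simp only [ContinuousMap.mul_apply, ContinuousMap.pow_apply, norm_mul, norm_pow]
      rcases eq_or_ne (f z) 0 with h0 | h0
      · rw [h0]; simp; positivity
      · have h1 : ‖f z‖ ≤ ‖f‖ := f.norm_coe_le_norm z
        have h2 : ‖m z‖ ≤ r := by
          have := hf z h0
          simpa [hm, norm_sub_rev] using this
        exact mul_le_mul h1 (pow_le_pow_left₀ (norm_nonneg _) h2 n) (by positivity)
          (norm_nonneg _)
    calc ‖Ψ f‖ = ‖Ψ (f * m ^ n) * R ^ n‖ := by rw [← hfm]
      _ ≤ ‖Ψ (f * m ^ n)‖ * ‖R ^ n‖ := norm_mul_le _ _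
      _ ≤ (C * ‖f * m ^ n‖) * ‖R‖ ^ n := by
          exact mul_le_mul (hC _) hRn (norm_nonneg _) (by positivity)
      _ ≤ (C * (‖f‖ * r ^ n)) * ‖R‖ ^ n := by
          have := mul_le_mul_of_nonneg_left hnorm hC0
          exact mul_le_mul_of_nonneg_right this (by positivity)
      _ = (C * ‖f‖) * (r * ‖R‖) ^ n := by ring
  have hlim : Tendsto (fun n : ℕ => (C * ‖f‖) * (r * ‖R‖) ^ n) atTop (𝓝 0) := by
    have := (tendsto_pow_atTop_nhds_zero_of_lt_one (by positivity) hrM).const_mul (C * ‖f‖)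
    simpa using this
  have : ‖Ψ f‖ ≤ 0 := ge_of_tendsto' hlim key
  exact norm_le_zero_iff.mp this

/-- If `f` is supported in a finite union of small resolvent-balls, `Ψ f = 0`. -/
lemma ck_cover_lemma (Z : X →L[ℂ] X) (K : Set ℂ) [CompactSpace K]
    (Ψ : C(↥K, ℂ) → X →L[ℂ] X)
    (hadd : ∀ g h : C(↥K, ℂ), Ψ (g + h) = Ψ g + Ψ h)
    (hsmul : ∀ (c : ℂ) (g : C(↥K, ℂ)), Ψ (c • g) = c • Ψ g)
    (hmul : ∀ g h : C(↥K, ℂ), Ψ (g * h) = Ψ g * Ψ h)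
    (hone : Ψ 1 = 1)
    (hiota : Ψ ⟨fun z => (z : ℂ), continuous_subtype_val⟩ = Z)
    (C : ℝ) (hC0 : 0 ≤ C) (hC : ∀ f : C(↥K, ℂ), ‖Ψ f‖ ≤ C * ‖f‖)
    (rad : ℂ → ℝ) (hrad : ∀ l, 0 < rad l)
    (hradM : ∀ l, rad l * ‖Ring.inverse (algebraMap ℂ (X →L[ℂ] X) l - Z)‖ < 1)
    (t : Finset ℂ) (ht : ∀ l ∈ t, l ∉ spectrum ℂ Z)
    (f : C(↥K, ℂ)) (hf : ∀ z : ↥K, f z ≠ 0 → ∃ l ∈ t, ‖(z : ℂ) - l‖ < rad l / 2) :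
    Ψ f = 0 := by
  have hzero : Ψ 0 = 0 := by simpa using hsmul 0 0
  induction t using Finset.induction_on generalizing f with
  | empty =>
    have hf0 : f = 0 := by
      ext z
      by_contra hz
      obtain ⟨l, hl, -⟩ := hf z hz
      exact absurd hl (Finset.notMem_empty l)
    rw [hf0, hzero]
  | @insert μ s hμs ih =>
    have hrμ : 0 < rad μ := hrad μ
    have hcψ : Continuous fun z : ↥K => min 1 (max 0 (2 - 2 * ‖(z : ℂ) - μ‖ / rad μ)) := by
      apply continuous_const.min
      apply continuous_const.max
      apply continuous_const.sub
      exact (continuous_const.mul (continuous_subtype_val.sub continuous_const).norm).div_const _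
    set ψ : C(↥K, ℝ) := ⟨fun z => min 1 (max 0 (2 - 2 * ‖(z : ℂ) - μ‖ / rad μ)), hcψ⟩
      with hψ
    set ψc : C(↥K, ℂ) := ⟨fun z => ((ψ z : ℝ) : ℂ),
      Complex.continuous_ofReal.comp ψ.continuous⟩ with hψc
    -- value facts about ψ
    have hψ1 : ∀ z : ↥K, ‖(z : ℂ) - μ‖ ≤ rad μ / 2 → ψ z = 1 := by
      intro z hz
      have hd : 2 * ‖(z : ℂ) - μ‖ / rad μ ≤ 1 := by
        rw [div_le_one hrμ]; nlinarith
      have h2 : (1 : ℝ) ≤ 2 - 2 * ‖(z : ℂ) - μ‖ / rad μ := by linarith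
      simp only [hψ, ContinuousMap.coe_mk]
      rw [min_eq_left (le_max_of_le_right h2)]
    have hψ0 : ∀ z : ↥K, rad μ ≤ ‖(z : ℂ) - μ‖ → ψ z = 0 := by
      intro z hz
      have hd : (2:ℝ) ≤ 2 * ‖(z : ℂ) - μ‖ / rad μ := by
        rw [le_div_iff₀ hrμ]; nlinarith
      have h2 : 2 - 2 * ‖(z : ℂ) - μ‖ / rad μ ≤ 0 := by linarith
      simp only [hψ, ContinuousMap.coe_mk]
      rw [max_eq_left h2, min_eq_right zero_le_one]
    have hsplit : f = f * ψc + f * (1 - ψc) := by ring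
    have h1 : Ψ (f * ψc) = 0 := by
      refine ck_ball_lemma Z K Ψ hadd hsmul hmul hone hiota C hC0 hC μ
        (ht μ (Finset.mem_insert_self μ s)) (rad μ) hrμ.le (hradM μ) _ ?_
      intro z hz
      by_contra hle
      push_neg at hle
      have := hψ0 z hle.le
      simp only [ContinuousMap.mul_apply, hψc, ContinuousMap.coe_mk, this] at hz
      simp at hz
    have h2 : Ψ (f * (1 - ψc)) = 0 := by
      refine ih (fun l hl => ht l (Finset.mem_insert_of_mem hl)) _ ?_
      intro z hz
      have hfz : f z ≠ 0 := by
        intro h0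
        simp only [ContinuousMap.mul_apply, h0, zero_mul, ne_eq, not_true_eq_false] at hz
      have hψz : ψ z ≠ 1 := by
        intro h1'
        have : (1 - ψc) z = 0 := by
          simp [hψc, h1']
        simp only [ContinuousMap.mul_apply, this, mul_zero, ne_eq, not_true_eq_false] at hz
      obtain ⟨l, hl, hball⟩ := hf z hfz
      rcases Finset.mem_insert.mp hl with rfl | hls
      · exact absurd (hψ1 z hball.le) hψz
      · exact ⟨l, hls, hball⟩
    rw [hsplit, hadd, h1, h2, add_zero]

end Aux

/-- **Vanishing of the `C(K)`-calculus on functions vanishing on the spectrum**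
(Lemma 3.1(d)). -/
theorem ck_calculus_vanishing [CompleteSpace X]
    (Z : X →L[ℂ] X)
    (K : Set ℂ) (hK : IsCompact K) (hKi : K ⊆ {z : ℂ | z.re = 0})
    (hspec : spectrum ℂ Z ⊆ K)
    (Ψ : C(↥K, ℂ) → X →L[ℂ] X) (hΨ : IsCKCalculus K Z Ψ)
    (g : C(↥K, ℂ)) (hg : ∀ z : ↥K, (z : ℂ) ∈ spectrum ℂ Z → g z = 0) :
    Ψ g = 0 := by
  obtain ⟨hadd, hsmul, hmul, hone, ⟨C₀, hC₀⟩, hiota⟩ := hΨ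
  rcases subsingleton_or_nontrivial X with hX | hX
  · exact ContinuousLinearMap.ext fun x => Subsingleton.elim _ _
  haveI : CompactSpace K := isCompact_iff_compactSpace.mp hK
  set C : ℝ := max C₀ 0 with hCdef
  have hC0 : 0 ≤ C := le_max_right _ _
  have hC : ∀ f : C(↥K, ℂ), ‖Ψ f‖ ≤ C * ‖f‖ := by
    intro f
    calc ‖Ψ f‖ ≤ C₀ * ⨆ z : K, ‖f z‖ := hC₀ f
      _ = C₀ * ‖f‖ := by rw [f.norm_eq_iSup_norm]
      _ ≤ C * ‖f‖ := mul_le_mul_of_nonneg_right (le_max_left _ _) (norm_nonneg _)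
  -- the radius function
  set rad : ℂ → ℝ := fun l => (‖Ring.inverse (algebraMap ℂ (X →L[ℂ] X) l - Z)‖ + 1)⁻¹
    with hraddef
  have hrad : ∀ l, 0 < rad l := fun l => by positivity
  have hradM : ∀ l, rad l * ‖Ring.inverse (algebraMap ℂ (X →L[ℂ] X) l - Z)‖ < 1 := by
    intro l
    rw [hraddef]
    set M := ‖Ring.inverse (algebraMap ℂ (X →L[ℂ] X) l - Z)‖ with hM
    have hM0 : 0 ≤ M := norm_nonneg _
    rw [inv_mul_eq_div, div_lt_one (by positivity)]
    linarith
  -- main estimate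
  have hmain : ∀ ε : ℝ, 0 < ε → ‖Ψ g‖ ≤ C * ε := by
    intro ε hε
    -- Urysohn separation
    set S : Set ↥K := Subtype.val ⁻¹' spectrum ℂ Z with hSdef
    have hScl : IsClosed S := (spectrum.isClosed Z).preimage continuous_subtype_val
    set F : Set ↥K := {z : ↥K | ε ≤ ‖g z‖} with hFdef
    have hFcl : IsClosed F := isClosed_le continuous_const g.continuous.norm
    have hdisj : Disjoint S F := by
      rw [Set.disjoint_left]
      intro z hzS hzF
      have := hg z hzS
      rw [hFdef] at hzF
      simp only [Set.mem_setOf_eq, this, norm_zero] at hzF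
      linarith
    obtain ⟨h₀, h₀S, h₀F, h₀I⟩ := exists_continuous_zero_one_of_isClosed hScl hFcl hdisj
    have hchc : Continuous fun z : ↥K => ((max (2 * h₀ z - 1) 0 : ℝ) : ℂ) := by
      apply Complex.continuous_ofReal.comp
      exact ((continuous_const.mul h₀.continuous).sub continuous_const).max continuous_const
    set hc : C(↥K, ℂ) := ⟨fun z => ((max (2 * h₀ z - 1) 0 : ℝ) : ℂ), hchc⟩ with hhc
    set f : C(↥K, ℂ) := g * hc with hfdef
    -- the compact set where h₀ ≥ 1/2
    set F' : Set ↥K := {z : ↥K | (1:ℝ)/2 ≤ h₀ z} with hF'def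
    have hF'cl : IsClosed F' := isClosed_le continuous_const h₀.continuous
    have hF'cpt : IsCompact F' := hF'cl.isCompact
    have hF'S : ∀ z ∈ F', (z : ℂ) ∉ spectrum ℂ Z := by
      intro z hz hzs
      have : h₀ z = 0 := h₀S hzs
      rw [hF'def] at hz
      simp only [Set.mem_setOf_eq, this] at hz
      linarith
    -- finite subcover
    set U : ↥K → Set ↥K := fun i =>
      if ((i : ℂ) ∈ spectrum ℂ Z) then ∅ else Metric.ball i (rad (i : ℂ) / 2) with hUdef
    have hUball : ∀ i : ↥K, (i : ℂ) ∉ spectrum ℂ Z → U i = Metric.ball i (rad (i : ℂ) / 2) := by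
      intro i h
      simp only [hUdef]
      rw [if_neg h]
    have hUempty : ∀ i : ↥K, (i : ℂ) ∈ spectrum ℂ Z → U i = ∅ := by
      intro i h
      simp only [hUdef]
      rw [if_pos h]
    have hUopen : ∀ i : ↥K, IsOpen (U i) := by
      intro i
      by_cases h : (i : ℂ) ∈ spectrum ℂ Z
      · rw [hUempty i h]; exact isOpen_empty
      · rw [hUball i h]; exact Metric.isOpen_ball
    have hcov : F' ⊆ ⋃ i : ↥K, U i := by
      intro z hz
      refine Set.mem_iUnion.mpr ⟨z, ?_⟩
      rw [hUball z (hF'S z hz)]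
      simp only [Metric.mem_ball, dist_self]
      have := hrad ((z : ℂ))
      positivity
    obtain ⟨t, htcov⟩ := hF'cpt.elim_finite_subcover _ hUopen hcov
    set T : Finset ℂ :=
      (t.filter (fun i : ↥K => (i : ℂ) ∉ spectrum ℂ Z)).image (fun i : ↥K => (i : ℂ))
      with hTdef
    have hT : ∀ l ∈ T, l ∉ spectrum ℂ Z := by
      intro l hl
      obtain ⟨i, hi, rfl⟩ := Finset.mem_image.mp hl
      exact (Finset.mem_filter.mp hi).2
    have hΨf : Ψ f = 0 := by
      refine ck_cover_lemma Z K Ψ hadd hsmul hmul hone hiota C hC0 hC rad hrad hradM T hT f ?_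
      intro z hz
      have hzF' : z ∈ F' := by
        have hcz : hc z ≠ 0 := by
          intro h0
          simp only [hfdef, ContinuousMap.mul_apply, h0, mul_zero, ne_eq,
            not_true_eq_false] at hz
        have : max (2 * h₀ z - 1) 0 ≠ 0 := by
          intro h0
          simp [hhc, h0] at hcz
        have h1 : 0 < 2 * h₀ z - 1 := by
          rcases lt_or_ge 0 (2 * h₀ z - 1) with h | h
          · exact h
          · exact absurd (max_eq_right h) this
        rw [hF'def]
        simp only [Set.mem_setOf_eq]
        linarith
      have := htcov hzF'
      obtain ⟨i, hit, hball⟩ := Set.mem_iUnion₂.mp this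
      have hispec : (i : ℂ) ∉ spectrum ℂ Z := by
        intro hsp
        rw [hUempty i hsp] at hball
        exact hball
      rw [hUball i hispec] at hball
      refine ⟨(i : ℂ), Finset.mem_image_of_mem _ (Finset.mem_filter.mpr ⟨hit, hispec⟩), ?_⟩
      rw [Metric.mem_ball, Subtype.dist_eq, Complex.dist_eq] at hball
      exact hball
    -- now the estimate
    have hgsplit : g = f + g * (1 - hc) := by rw [hfdef]; ring
    have hb : ‖g * (1 - hc)‖ ≤ ε := by
      rw [ContinuousMap.norm_le _ hε.le]
      intro z
      simp only [ContinuousMap.mul_apply, ContinuousMap.sub_apply, ContinuousMap.one_apply,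
        norm_mul]
      rcases le_or_gt ε ‖g z‖ with hge | hge
      · have hzF : z ∈ F := hge
        have h1 : h₀ z = 1 := h₀F hzF
        have : hc z = 1 := by
          simp [hhc, h1]
          norm_num
        rw [this]
        simp [hε.le]
      · have hcI : (0:ℝ) ≤ max (2 * h₀ z - 1) 0 ∧ max (2 * h₀ z - 1) 0 ≤ 1 := by
          constructor
          · exact le_max_right _ _
          · have := (h₀I z).2
            apply max_le
            · linarith
            · norm_num
        have h1 : ‖(1 : ℂ) - hc z‖ ≤ 1 := by
          have he : (1 : ℂ) - hc z = (((1 - max (2 * h₀ z - 1) 0 : ℝ)) : ℂ) := by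
            simp only [hhc, ContinuousMap.coe_mk]
            push_cast
            ring
          rw [he]
          calc ‖(((1 - max (2 * h₀ z - 1) 0 : ℝ)) : ℂ)‖
              = ‖(1 - max (2 * h₀ z - 1) 0 : ℝ)‖ := Complex.norm_real _
            _ = |1 - max (2 * h₀ z - 1) 0| := Real.norm_eq_abs _
            _ ≤ 1 := by rw [_root_.abs_of_nonneg (by linarith [hcI.2])]; linarith [hcI.1]
        calc ‖g z‖ * ‖(1:ℂ) - hc z‖ ≤ ‖g z‖ * 1 :=
              mul_le_mul_of_nonneg_left h1 (norm_nonneg _)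
          _ ≤ ε := by rw [mul_one]; exact hge.le
    calc ‖Ψ g‖ = ‖Ψ f + Ψ (g * (1 - hc))‖ := by rw [← hadd, ← hgsplit]
      _ = ‖Ψ (g * (1 - hc))‖ := by rw [hΨf, zero_add]
      _ ≤ C * ‖g * (1 - hc)‖ := hC _
      _ ≤ C * ε := mul_le_mul_of_nonneg_left hb hC0
  -- conclude
  have hfinal : ‖Ψ g‖ ≤ 0 := by
    refine le_of_forall_pos_le_add ?_
    intro ε hε
    have := hmain (ε / (C + 1)) (by positivity)
    calc ‖Ψ g‖ ≤ C * (ε / (C + 1)) := this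
      _ ≤ (C + 1) * (ε / (C + 1)) := by
          apply mul_le_mul_of_nonneg_right (by linarith) (by positivity)
      _ = ε := by field_simp
      _ = 0 + ε := by rw [zero_add]
  exact norm_le_zero_iff.mp hfinal
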